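/- Let p be a prime and let q be an odd prime dividing p + 1. If σ is an automorphism of K = ℤ/p × ℤ/p of order q, then the only subgroups S of K satisfying σ(S) = S are the trivial subgroup and K itself. -/

import Mathlib

lemma key_qp (p q : ℕ) (hp : p.Prime) (hq : q.Prime) (hqodd : Odd q) (hdvd : q ∣ p + 1) :
    ¬ q ∣ p ∧ ¬ q ∣ p - 1 := by
  have hp2 := hp.two_le
  have hq2 := hq.two_le
  have hqo := Nat.odd_iff.mp hqodd
  constructor
  · intro h
    have h1 : q ∣ 1 := by simpa using Nat.dvd_sub hdvd h
    have := Nat.le_of_dvd one_pos h1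
    omega
  · intro h
    have h2 : q ∣ 2 := by
      have := Nat.dvd_sub hdvd h
      have he : p + 1 - (p - 1) = 2 := by omega
      rwa [he] at this
    have := Nat.le_of_dvd (by norm_num) h2
    omega

lemma key_fix (p q : ℕ) (hp : p.Prime) (hq : q.Prime) (hqodd : Odd q) (hdvd : q ∣ p + 1)
    (σ : AddAut (ZMod p × ZMod p)) (hσq : q • σ = 0)
    (S : AddSubgroup (ZMod p × ZMod p)) (hS : AddSubgroup.map σ.toAddMonoidHom S = S)
    (hbot : S ≠ ⊥) (htop : S ≠ ⊤) : ∀ s ∈ S, σ s = s := by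
  haveI : Fact p.Prime := ⟨hp⟩
  have hpsmul : ∀ x : ZMod p × ZMod p, p • x = 0 := by
    intro x
    ext <;> simp [nsmul_eq_mul, ZMod.natCast_self]
  have hpzsmul : ∀ x : ZMod p × ZMod p, (p : ℤ) • x = 0 := by
    intro x
    rw [natCast_zsmul]
    exact hpsmul x
  obtain ⟨v, hvS, hv0⟩ : ∃ v ∈ S, v ≠ 0 := by
    by_contra h
    push_neg at h
    exact hbot (AddSubgroup.eq_bot_iff_forall S |>.mpr h)
  have hvord : addOrderOf v = p := by
    have h1 : addOrderOf v ∣ p := addOrderOf_dvd_of_nsmul_eq_zero (hpsmul v)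
    rcases (Nat.dvd_prime hp).mp h1 with h | h
    · exact absurd (AddMonoid.addOrderOf_eq_one_iff.mp h) hv0
    · exact h
  have hcardK : Nat.card (ZMod p × ZMod p) = p ^ 2 := by
    simp [Nat.card_prod, Nat.card_zmod, sq]
  have hcardS : Nat.card S = p := by
    have hdvd2 : Nat.card S ∣ p ^ 2 := hcardK ▸ AddSubgroup.card_addSubgroup_dvd_card S
    obtain ⟨m, hm, he⟩ := (Nat.dvd_prime_pow hp).mp hdvd2
    interval_cases m
    · simp at he
      exact absurd (AddSubgroup.eq_bot_of_card_eq S (by simp [he])) hbot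
    · simpa using he
    · exact absurd (AddSubgroup.eq_top_of_card_eq S (by rw [he, hcardK])) htop
  have hSz : S = AddSubgroup.zmultiples v := by
    have hle : AddSubgroup.zmultiples v ≤ S := by
      rintro x ⟨n, rfl⟩
      exact zsmul_mem hvS n
    have hcz : Nat.card (AddSubgroup.zmultiples v) = p := by
      rw [Nat.card_zmultiples, hvord]
    exact (AddSubgroup.eq_of_le_of_card_ge hle (by rw [hcardS, hcz])).symm
  have hσvS : σ v ∈ S := by
    rw [← hS]; exact ⟨v, hvS, rfl⟩
  obtain ⟨n, hn⟩ : ∃ n : ℤ, n • v = σ v := by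
    rw [hSz] at hσvS
    exact hσvS
  replace hn := hn.symm
  have hpow : ∀ k : ℕ, (k • σ) v = n ^ k • v := by
    intro k
    induction k with
    | zero => simp
    | succ k ih =>
      rw [succ_nsmul, AddAut.add_apply, hn, map_zsmul, ih, smul_smul, pow_succ, mul_comm]
  have hq1 : (n ^ q - 1) • v = 0 := by
    have h2 : (q • σ) v = v := by rw [hσq]; rfl
    rw [hpow q] at h2
    rw [sub_smul, h2, one_smul, sub_self]
  have hordz : (p : ℤ) ∣ n ^ q - 1 := by
    have := addOrderOf_dvd_iff_zsmul_eq_zero.mpr hq1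
    rwa [hvord] at this
  -- pass to ZMod p
  have hlam : ((n : ZMod p)) ^ q = 1 := by
    have : ((n ^ q - 1 : ℤ) : ZMod p) = 0 := (ZMod.intCast_zmod_eq_zero_iff_dvd _ _).mpr hordz
    push_cast at this
    linear_combination this
  have hlam0 : (n : ZMod p) ≠ 0 := by
    intro h0
    have hd : (p : ℤ) ∣ n := (ZMod.intCast_zmod_eq_zero_iff_dvd _ _).mp h0
    obtain ⟨m, rfl⟩ := hd
    have : σ v = 0 := by
      rw [hn, mul_zsmul, hpzsmul]
    exact hv0 (by simpa using σ.injective (by simpa using this))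
  -- unit argument
  have hlam1 : (n : ZMod p) = 1 := by
    let u : (ZMod p)ˣ := Units.mk0 _ hlam0
    have hu : u ^ q = 1 := by
      ext
      simpa [u] using hlam
    have h1 : orderOf u ∣ q := orderOf_dvd_of_pow_eq_one hu
    have h2 : orderOf u ∣ p - 1 := by
      have : orderOf u ∣ Fintype.card (ZMod p)ˣ := orderOf_dvd_card
      rwa [ZMod.card_units_eq_totient, Nat.totient_prime hp] at this
    rcases (Nat.dvd_prime hq).mp h1 with h | h
    · have : u = 1 := orderOf_eq_one_iff.mp h
      simpa [u, Units.ext_iff] using this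
    · exact absurd (h ▸ h2) (key_qp p q hp hq hqodd hdvd).2
  have hfixv : σ v = v := by
    have hd : (p : ℤ) ∣ n - 1 := by
      have : ((n - 1 : ℤ) : ZMod p) = 0 := by push_cast [hlam1]; ring
      exact (ZMod.intCast_zmod_eq_zero_iff_dvd _ _).mp this
    obtain ⟨m, hm⟩ := hd
    have hn1 : n = 1 + p * m := by omega
    rw [hn, hn1, add_zsmul, one_zsmul, mul_zsmul, hpzsmul, add_zero]
  intro s hs
  rw [hSz] at hs
  obtain ⟨m, rfl⟩ := hs
  rw [map_zsmul, hfixv]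

/-- If `p` is prime, `q` is an odd prime dividing `p + 1`, and `σ` is an automorphism of
`K = ℤ/p × ℤ/p` of order `q`, then the only `σ`-invariant subgroups of `K` are `⊥` and `⊤`. -/
theorem stmt_10 (p q : ℕ) (hp : p.Prime) (hq : q.Prime) (hqodd : Odd q) (hdvd : q ∣ p + 1)
    (σ : AddAut (ZMod p × ZMod p)) (hσ : addOrderOf σ = q)
    (S : AddSubgroup (ZMod p × ZMod p)) (hS : AddSubgroup.map σ.toAddMonoidHom S = S) :
    S = ⊥ ∨ S = ⊤ := by
  haveI : Fact p.Prime := ⟨hp⟩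
  have hq2 := hq.two_le
  have hσq : q • σ = 0 := by rw [← hσ]; exact addOrderOf_nsmul_eq_zero σ
  have hσne : σ ≠ 0 := by
    intro h
    rw [h, addOrderOf_zero] at hσ
    omega
  by_contra hcon
  push_neg at hcon
  obtain ⟨hbot, htop⟩ := hcon
  have hfixS := key_fix p q hp hq hqodd hdvd σ hσq S hS hbot htop
  -- τ = σ - id
  set τ : (ZMod p × ZMod p) →+ (ZMod p × ZMod p) :=
    σ.toAddMonoidHom - AddMonoidHom.id _ with hτ
  have hτ_apply : ∀ x, τ x = σ x - x := fun x => rfl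
  have hcomm : ∀ x, σ (τ x) = τ (σ x) := by
    intro x
    rw [hτ_apply, hτ_apply, map_sub]
  set T : AddSubgroup (ZMod p × ZMod p) := τ.range with hT
  have hTinv : AddSubgroup.map σ.toAddMonoidHom T = T := by
    ext y
    constructor
    · rintro ⟨x, ⟨z, rfl⟩, rfl⟩
      exact ⟨σ z, (hcomm z).symm ▸ rfl⟩
    · rintro ⟨z, rfl⟩
      refine ⟨τ ((-σ) z), ⟨(-σ) z, rfl⟩, ?_⟩
      show σ (τ ((-σ) z)) = τ z
      rw [hcomm]
      simp
  -- T ≠ ⊥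
  have hTbot : T ≠ ⊥ := by
    intro h
    apply hσne
    apply DFunLike.ext
    intro x
    have hx : τ x ∈ T := ⟨x, rfl⟩
    rw [h, AddSubgroup.mem_bot, hτ_apply, sub_eq_zero] at hx
    exact hx
  -- v from S, fixed and nonzero
  obtain ⟨v, hvS, hv0⟩ : ∃ v ∈ S, v ≠ 0 := by
    by_contra h
    push_neg at h
    exact hbot (AddSubgroup.eq_bot_iff_forall S |>.mpr h)
  have hτv : τ v = 0 := by
    rw [hτ_apply, hfixS v hvS, sub_self]
  have hTtop : T ≠ ⊤ := by
    intro h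
    have hsurj : Function.Surjective τ := by
      intro y
      have : y ∈ T := h ▸ AddSubgroup.mem_top y
      exact this
    haveI : NeZero p := ⟨hp.pos.ne'⟩
    have hinj : Function.Injective τ := Finite.injective_iff_surjective.mpr hsurj
    exact hv0 (hinj (by rw [hτv, map_zero]))
  have hfixT := key_fix p q hp hq hqodd hdvd σ hσq T hTinv hTbot hTtop
  have hττ : ∀ x, τ (τ x) = 0 := by
    intro x
    rw [hτ_apply (τ x), hfixT (τ x) ⟨x, rfl⟩, sub_self]
  have hσfixτ : ∀ x, σ (τ x) = τ x := fun x => hfixT (τ x) ⟨x, rfl⟩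
  have hpowτ : ∀ (k : ℕ) (x : ZMod p × ZMod p), (k • σ) x = x + k • τ x := by
    intro k
    induction k with
    | zero => intro x; simp
    | succ k ih =>
      intro x
      rw [succ_nsmul', AddAut.add_apply, ih x, map_add, map_nsmul, hσfixτ]
      have h1 : σ x = x + τ x := by rw [hτ_apply]; abel
      rw [h1, succ_nsmul]
      abel
  have hqτ : ∀ x, q • τ x = 0 := by
    intro x
    have h1 : (q • σ) x = x := by rw [hσq]; rfl
    rw [hpowτ q x] at h1
    rwa [add_eq_left] at h1
  have hpsmul : ∀ x : ZMod p × ZMod p, p • x = 0 := by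
    intro x
    ext <;> simp [nsmul_eq_mul, ZMod.natCast_self]
  have hcop : Nat.Coprime q p := (hq.coprime_iff_not_dvd).mpr (key_qp p q hp hq hqodd hdvd).1
  have hτ0 : ∀ x, τ x = 0 := by
    intro x
    have h1 : addOrderOf (τ x) ∣ q := addOrderOf_dvd_of_nsmul_eq_zero (hqτ x)
    have h2 : addOrderOf (τ x) ∣ p := addOrderOf_dvd_of_nsmul_eq_zero (hpsmul (τ x))
    have h3 : addOrderOf (τ x) ∣ 1 := hcop ▸ Nat.dvd_gcd h1 h2
    exact AddMonoid.addOrderOf_eq_one_iff.mp (Nat.dvd_one.mp h3)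
  apply hσne
  apply DFunLike.ext
  intro x
  have := hτ0 x
  rw [hτ_apply, sub_eq_zero] at this
  exact this
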